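/- Marginal value of the expected-value function under independent activation: for g(S) := Σ_{Z⊆N} γ(Z,N) f(Z∩S) where γ(X,S) = Π_{e∈X} p_e Π_{e∈S∖X}(1−p_e), and any e ∈ N, S ⊆ N∖{e}, it holds that g(S∪{e}) − g(S) = Σ_{X⊆S} γ(X∪{e}, S∪{e}) · [f(X∪{e}) − f(X)] = p_e · Σ_{X⊆S} γ(X,S) [f(X∪{e}) − f(X)]. -/
import Mathlib


open Finset

/-- `γ X S = Π_{e∈X} p_e · Π_{e∈S∖X} (1−p_e)`: probability that exactly `X` is active in `S`. -/
def activeProb {α : Type*} [DecidableEq α] (p : α → ℝ) (X S : Finset α) : ℝ :=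
  (∏ e ∈ X, p e) * ∏ e ∈ S \ X, (1 - p e)

lemma activeProb_insert_notMem {α : Type*} [DecidableEq α] (p : α → ℝ) {b : α}
    {X S : Finset α} (hb : b ∉ X) (hbS : b ∉ S \ X) :
    activeProb p X (insert b S) = (1 - p b) * activeProb p X S := by
  unfold activeProb
  rw [Finset.insert_sdiff_of_notMem _ hb, Finset.prod_insert hbS]
  ring

lemma activeProb_insert_mem {α : Type*} [DecidableEq α] (p : α → ℝ) {b : α}
    {X S : Finset α} (hb : b ∉ X) (hbS : b ∉ S) :
    activeProb p (insert b X) (insert b S) = p b * activeProb p X S := by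
  unfold activeProb
  have h1 : insert b S \ insert b X = S \ X := by
    ext x
    simp only [Finset.mem_sdiff, Finset.mem_insert, not_or]
    constructor
    · rintro ⟨hx | hx, hxb, hxX⟩
      · exact absurd hx hxb
      · exact ⟨hx, hxX⟩
    · rintro ⟨hx, hxX⟩
      exact ⟨Or.inr hx, fun hxb => hbS (hxb ▸ hx), hxX⟩
  rw [h1, Finset.prod_insert hb]
  ring

/-- Marginalization: summing `γ(·, A ∪ B)` over subsets of `A ∪ B` of a function depending
only on the intersection with `A` gives the sum of `γ(·, A)` over subsets of `A`. -/
lemma activeProb_marginal {α : Type*} [DecidableEq α] (p : α → ℝ) (h : Finset α → ℝ)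
    (A B : Finset α) (hAB : Disjoint A B) :
    ∑ Z ∈ (A ∪ B).powerset, activeProb p Z (A ∪ B) * h (Z ∩ A)
      = ∑ X ∈ A.powerset, activeProb p X A * h X := by
  induction B using Finset.induction_on with
  | empty =>
    rw [Finset.union_empty]
    apply Finset.sum_congr rfl
    intro X hX
    rw [Finset.inter_eq_left.mpr (Finset.mem_powerset.mp hX)]
  | @insert b B hbB ih =>
    have hbA : b ∉ A := fun h => (Finset.disjoint_left.mp hAB h) (Finset.mem_insert_self b B)
    have hAB' : Disjoint A B := hAB.mono_right (Finset.subset_insert b B)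
    have hb : b ∉ A ∪ B := by simp [hbA, hbB]
    rw [Finset.union_insert, Finset.sum_powerset_insert hb]
    have h1 : ∀ Z ∈ (A ∪ B).powerset,
        activeProb p Z (insert b (A ∪ B)) * h (Z ∩ A)
          = (1 - p b) * (activeProb p Z (A ∪ B) * h (Z ∩ A)) := by
      intro Z hZ
      have hbZ : b ∉ Z := fun hmem => hb (Finset.mem_powerset.mp hZ hmem)
      rw [activeProb_insert_notMem p hbZ (fun hmem => hb (Finset.mem_sdiff.mp hmem).1)]
      ring
    have h2 : ∀ Z ∈ (A ∪ B).powerset,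
        activeProb p (insert b Z) (insert b (A ∪ B)) * h ((insert b Z) ∩ A)
          = p b * (activeProb p Z (A ∪ B) * h (Z ∩ A)) := by
      intro Z hZ
      have hbZ : b ∉ Z := fun hmem => hb (Finset.mem_powerset.mp hZ hmem)
      rw [activeProb_insert_mem p hbZ hb]
      have : (insert b Z) ∩ A = Z ∩ A := by
        ext x
        simp only [Finset.mem_inter, Finset.mem_insert]
        constructor
        · rintro ⟨hx | hx, hxA⟩
          · exact absurd (hx ▸ hxA) hbA
          · exact ⟨hx, hxA⟩
        · rintro ⟨hx, hxA⟩; exact ⟨Or.inr hx, hxA⟩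
      rw [this]
      ring
    rw [Finset.sum_congr rfl h1, Finset.sum_congr rfl h2, ← Finset.mul_sum, ← Finset.mul_sum,
      ih hAB']
    ring

lemma g_eq {α : Type*} [Fintype α] [DecidableEq α] (p : α → ℝ) (f : Finset α → ℝ)
    (g : Finset α → ℝ)
    (hg : ∀ S : Finset α, g S = ∑ Z ∈ (Finset.univ : Finset α).powerset,
      activeProb p Z Finset.univ * f (Z ∩ S))
    (S : Finset α) :
    g S = ∑ X ∈ S.powerset, activeProb p X S * f X := by
  rw [hg S, ← Finset.union_compl S]
  exact activeProb_marginal p f S Sᶜ disjoint_compl_right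

/-- marginal value of the expected-value function under independent
activation: for `g(S) = Σ_{Z⊆N} γ(Z,N) f(Z∩S)` and `e ∉ S`,
`g(S∪{e}) − g(S) = Σ_{X⊆S} γ(X∪{e},S∪{e})·[f(X∪{e})−f(X)]
               = p_e · Σ_{X⊆S} γ(X,S)·[f(X∪{e})−f(X)]`. -/
theorem stmt_11 {α : Type*} [Fintype α] [DecidableEq α]
    (p : α → ℝ) (hp : ∀ e, 0 ≤ p e ∧ p e ≤ 1)
    (f : Finset α → ℝ)
    (g : Finset α → ℝ)
    (hg : ∀ S : Finset α, g S = ∑ Z ∈ (Finset.univ : Finset α).powerset,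
      activeProb p Z Finset.univ * f (Z ∩ S))
    (e : α) (S : Finset α) (he : e ∉ S) :
    g (insert e S) - g S =
      ∑ X ∈ S.powerset, activeProb p (insert e X) (insert e S) * (f (insert e X) - f X) ∧
    g (insert e S) - g S =
      p e * ∑ X ∈ S.powerset, activeProb p X S * (f (insert e X) - f X) := by
  have key : g (insert e S) - g S
      = p e * ∑ X ∈ S.powerset, activeProb p X S * (f (insert e X) - f X) := by
    rw [g_eq p f g hg (insert e S), g_eq p f g hg S, Finset.sum_powerset_insert he]
    have h1 : ∀ X ∈ S.powerset,
        activeProb p X (insert e S) * f X = (1 - p e) * (activeProb p X S * f X) := by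
      intro X hX
      have heX : e ∉ X := fun hmem => he (Finset.mem_powerset.mp hX hmem)
      rw [activeProb_insert_notMem p heX (fun hmem => he (Finset.mem_sdiff.mp hmem).1)]
      ring
    have h2 : ∀ X ∈ S.powerset,
        activeProb p (insert e X) (insert e S) * f (insert e X)
          = p e * (activeProb p X S * f (insert e X)) := by
      intro X hX
      have heX : e ∉ X := fun hmem => he (Finset.mem_powerset.mp hX hmem)
      rw [activeProb_insert_mem p heX he]
      ring
    rw [Finset.sum_congr rfl h1, Finset.sum_congr rfl h2, Finset.mul_sum,
      ← Finset.sum_add_distrib, ← Finset.sum_sub_distrib]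
    apply Finset.sum_congr rfl
    intro X hX
    ring
  constructor
  · rw [key, Finset.mul_sum]
    apply Finset.sum_congr rfl
    intro X hX
    have heX : e ∉ X := fun hmem => he (Finset.mem_powerset.mp hX hmem)
    rw [activeProb_insert_mem p heX he]
    ring
  · exact key
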